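/- Let H ≥ 1 be an integer, set α_t := (H+1)/(H+t) for t ≥ 1, and define α_t^t := α_t and α_t^j := α_j·∏_{k=j+1}^t (1 − α_k) for 1 ≤ j < t. Then for every t ≥ 1: Σ_{j=1}^t α_t^j·α_j² ≤ 3H/t. -/

import Mathlib

/-- Value-iteration step size `α_t = (H+1)/(H+t)`. -/
noncomputable def stepAlpha (H t : ℕ) : ℝ := ((H : ℝ) + 1) / ((H : ℝ) + t)

/-- Anytime-averaging weights `α_t^j = α_j ∏_{k=j+1}^t (1 − α_k)` (so `α_t^t = α_t`). -/
noncomputable def alphaW (H t j : ℕ) : ℝ :=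
  stepAlpha H j * ∏ k ∈ Finset.Icc (j + 1) t, (1 - stepAlpha H k)

/-- `Σ_{j=1}^t α_t^j · α_j² ≤ 3H/t`. -/
theorem alphaW_sum_sq_bound (H : ℕ) (hH : 1 ≤ H) (t : ℕ) (ht : 1 ≤ t) :
    (∑ j ∈ Finset.Icc 1 t, alphaW H t j * (stepAlpha H j) ^ 2) ≤ 3 * (H : ℝ) / t := by
  have hH1 : (1 : ℝ) ≤ (H : ℝ) := by exact_mod_cast hH
  induction t, ht using Nat.le_induction with
  | base =>
    have : Finset.Icc 2 1 = (∅ : Finset ℕ) := by decide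
    simp [alphaW, stepAlpha, this]
    rw [div_self (by positivity : ((H:ℝ)+1) ≠ 0)]
    norm_num
    linarith
  | succ n hn ih =>
    have hn1 : (1 : ℝ) ≤ (n : ℝ) := by exact_mod_cast hn
    set α := stepAlpha H (n + 1) with hα
    have hden : (0 : ℝ) < (H : ℝ) + (n + 1 : ℕ) := by
      push_cast; linarith
    have hα1 : α ≤ 1 := by
      rw [hα, stepAlpha, div_le_one hden]
      push_cast; linarith
    have hαnn : 0 ≤ α := by
      rw [hα, stepAlpha]; positivity
    -- top term
    have htop : alphaW H (n + 1) (n + 1) = α := by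
      simp [alphaW, Finset.Icc_eq_empty (by omega : ¬ (n + 1 + 1 ≤ n + 1)), hα]
    -- recurrence for j ≤ n
    have key : ∀ j ∈ Finset.Icc 1 n,
        alphaW H (n + 1) j * (stepAlpha H j) ^ 2
          = (1 - α) * (alphaW H n j * (stepAlpha H j) ^ 2) := by
      intro j hj
      simp only [Finset.mem_Icc] at hj
      rw [alphaW, Finset.prod_Icc_succ_top (by omega : j + 1 ≤ n + 1)]
      rw [alphaW]; ring
    rw [Finset.sum_Icc_succ_top (by omega : 1 ≤ n + 1), htop,
      Finset.sum_congr rfl key, ← Finset.mul_sum]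
    have h1 : (1 - α) * (∑ j ∈ Finset.Icc 1 n, alphaW H n j * (stepAlpha H j) ^ 2)
        ≤ (1 - α) * (3 * (H : ℝ) / n) :=
      mul_le_mul_of_nonneg_left ih (by linarith)
    have h2 : (1 - α) * (3 * (H : ℝ) / n) + α * α ^ 2 ≤ 3 * (H : ℝ) / (n + 1 : ℕ) := by
      rw [hα, stepAlpha]
      push_cast
      rw [show (H : ℝ) + ((n : ℝ) + 1) = (H : ℝ) + (n : ℝ) + 1 from by ring]
      have hnpos : (0 : ℝ) < (n : ℝ) := by linarith
      have hd : (0 : ℝ) < (H : ℝ) + n + 1 := by linarith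
      have e1 : 1 - ((H : ℝ) + 1) / ((H : ℝ) + n + 1) = (n : ℝ) / ((H : ℝ) + n + 1) := by
        rw [one_sub_div hd.ne']
        ring_nf
      rw [e1]
      have e2 : (n : ℝ) / ((H : ℝ) + n + 1) * (3 * (H : ℝ) / n) = 3 * (H : ℝ) / ((H : ℝ) + n + 1) := by
        rw [div_mul_div_comm, mul_comm, mul_div_mul_right _ _ (ne_of_gt hnpos)]
      rw [e2]
      have e3 : ((H : ℝ) + 1) / ((H : ℝ) + n + 1) * (((H : ℝ) + 1) / ((H : ℝ) + n + 1)) ^ 2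
          = ((H : ℝ) + 1) ^ 3 / ((H : ℝ) + n + 1) ^ 3 := by
        rw [div_pow, div_mul_div_comm]; ring_nf
      rw [e3]
      have hC : ((H : ℝ) + 1) ^ 3 * ((n : ℝ) + 1) ≤ 3 * (H : ℝ) ^ 2 * ((H : ℝ) + n + 1) ^ 2 := by
        nlinarith [mul_nonneg (by positivity : (0:ℝ) ≤ 3 * (H:ℝ)^2) (sq_nonneg ((H:ℝ) - ((n:ℝ)+1))),
          mul_nonneg (mul_nonneg (by linarith : (0:ℝ) ≤ (H:ℝ) - 1)
            (by positivity : (0:ℝ) ≤ 7*(H:ℝ)^2 + 4*(H:ℝ) + 1)) (by linarith : (0:ℝ) ≤ (n:ℝ) + 1),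
          mul_nonneg (by positivity : (0:ℝ) ≤ (H:ℝ)^3) (by linarith : (0:ℝ) ≤ (n:ℝ) + 1)]
      have hmain : (3 * (H : ℝ) * ((H : ℝ) + n + 1) ^ 2 + ((H : ℝ) + 1) ^ 3) * ((n : ℝ) + 1)
          ≤ 3 * (H : ℝ) * ((H : ℝ) + n + 1) ^ 3 := by nlinarith [hC]
      rw [div_add_div _ _ hd.ne' (by positivity : ((H:ℝ) + (n:ℝ) + 1) ^ 3 ≠ 0),
        div_le_div_iff₀ (by positivity) (by linarith : (0:ℝ) < (n:ℝ) + 1)]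
      nlinarith [mul_le_mul_of_nonneg_left hmain hd.le]
    calc (1 - α) * (∑ j ∈ Finset.Icc 1 n, alphaW H n j * (stepAlpha H j) ^ 2) + α * α ^ 2
        ≤ (1 - α) * (3 * (H : ℝ) / n) + α * α ^ 2 := by linarith
      _ ≤ 3 * (H : ℝ) / (n + 1 : ℕ) := h2
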